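/- arXiv:1009.1800 — 10 statements merged into one kernel-verified Lean document; each statement's English description precedes it below -/
import Mathlib

section
/- Let n ≥ 1 and let b_1, …, b_n be nonzero even integers. Then the continued fraction [b_1, …, b_n] is a well-defined rational number (no zero denominator occurs in its evaluation) and its absolute value is strictly less than 1. -/
/-- The continued fraction `[b₁, b₂, …, bₙ] = 1/(b₁ + 1/(b₂ + ⋯ + 1/bₙ))`,
evaluated in `ℚ` (with the convention `cf [] = 0`). -/
def cf : List ℤ → ℚ
  | [] => 0
  | b :: t => 1 / ((b : ℚ) + cf t)

lemma cf_denom_big (b : ℤ) (t : List ℤ) (hb0 : b ≠ 0) (hbe : Even b)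
    (ht : |cf t| < 1) : 1 < |(b : ℚ) + cf t| := by
  have h2 : (2 : ℚ) ≤ |(b : ℚ)| := by
    have : (2 : ℤ) ≤ |b| := by
      rcases hbe with ⟨k, hk⟩
      rcases abs_cases b with ⟨h, _⟩ | ⟨h, _⟩ <;> omega
    calc (2 : ℚ) = ((2 : ℤ) : ℚ) := by norm_num
      _ ≤ ((|b| : ℤ) : ℚ) := by exact_mod_cast this
      _ = |(b : ℚ)| := by rw [Int.cast_abs]
  have h3 := abs_sub_abs_le_abs_sub (b : ℚ) (-cf t)
  rw [sub_neg_eq_add, abs_neg] at h3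
  linarith

lemma cf_abs_lt (l : List ℤ) (hb : ∀ x ∈ l, x ≠ 0 ∧ Even x) : |cf l| < 1 := by
  induction l with
  | nil => simp [cf]
  | cons b t ih =>
    have hbb := hb b List.mem_cons_self
    have ht := ih fun x hx => hb x (List.mem_cons_of_mem _ hx)
    have hd := cf_denom_big b t hbb.1 hbb.2 ht
    have hd0 : |(b : ℚ) + cf t| ≠ 0 := by positivity
    rw [cf, abs_div, abs_one, div_lt_one (by positivity)]
    exact hd

/-- If `b₁, …, bₙ` (`n ≥ 1`) are nonzero even integers, then no zero denominator
occurs in the evaluation of the continued fraction `[b₁, …, bₙ]` (i.e. every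
partial denominator `bᵢ + [bᵢ₊₁, …, bₙ]` is nonzero), and `|[b₁, …, bₙ]| < 1`. -/
theorem stmt0 (l : List ℤ) (hne : l ≠ [])
    (hb : ∀ x ∈ l, x ≠ 0 ∧ Even x) :
    (∀ (b : ℤ) (t : List ℤ), b :: t <:+ l → ((b : ℚ) + cf t) ≠ 0) ∧ |cf l| < 1 := by
  constructor
  · intro b t hsuf
    have hmem : ∀ x ∈ b :: t, x ≠ 0 ∧ Even x := fun x hx => hb x (hsuf.subset hx)
    have hbb := hmem b List.mem_cons_self
    have ht := cf_abs_lt t fun x hx => hmem x (List.mem_cons_of_mem _ hx)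
    have := cf_denom_big b t hbb.1 hbb.2 ht
    intro h0
    rw [h0] at this
    norm_num at this
  · exact cf_abs_lt l hb
end

section
/- Let n ≥ 1 and let b_1, …, b_n be nonzero even integers. Write [b_1, …, b_n] = p/q in lowest terms with q > 0. Then the product p·q is even (equivalently, exactly one of p and q is even). -/
lemma cf_aux (l : List ℤ) (hne : l ≠ [])
    (hb : ∀ x ∈ l, x ≠ 0 ∧ Even x) :
    ∃ p q : ℤ, 0 < q ∧ Nat.Coprime p.natAbs q.natAbs ∧ cf l = p / q ∧ Even (p * q) := by
  induction l with
  | nil => exact absurd rfl hne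
  | cons b t ih =>
    obtain ⟨hb0, hbe⟩ := hb b (by simp)
    rcases eq_or_ne t [] with rfl | ht
    · -- cf [b] = 1/b
      rcases lt_or_gt_of_ne hb0 with hneg | hpos
      · refine ⟨-1, -b, by omega, by simp, ?_, by simpa using hbe.neg⟩
        simp [cf]
      · refine ⟨1, b, hpos, by simp, ?_, by simpa using hbe⟩
        simp [cf]
    · obtain ⟨p, q, hq, hcop, hcf, hev⟩ := ih ht (fun x hx => hb x (by simp [hx]))
      have hqQ : (q : ℚ) ≠ 0 := Int.cast_ne_zero.mpr hq.ne'
      set r : ℤ := b * q + p with hr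
      have hsum : (b : ℚ) + cf t = r / q := by
        rw [hcf]; field_simp; push_cast [hr]; ring
      have hcfl : cf (b :: t) = (q : ℚ) / r := by
        rw [cf, hsum, one_div_div]
      have hcopqr : Nat.Coprime q.natAbs r.natAbs := by
        have : IsCoprime p q := Int.isCoprime_iff_gcd_eq_one.mpr hcop
        have : IsCoprime q r := by
          rw [hr]
          have h2 := (this.symm.add_mul_left_right b).symm
          rw [add_comm, mul_comm] at h2
          exact h2.symm
        exact Int.isCoprime_iff_gcd_eq_one.mp this
      have hevqr : Even (q * r) := by
        have : q * r = b * q * q + p * q := by rw [hr]; ring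
        rw [this]
        exact ((hbe.mul_right q).mul_right q).add hev
      rcases lt_trichotomy r 0 with hrn | hr0 | hrp
      · refine ⟨-q, -r, by omega, by simpa using hcopqr, ?_, by simpa using hevqr⟩
        rw [hcfl]; push_cast; rw [neg_div_neg_eq]
      · refine ⟨0, 1, one_pos, by simp, ?_, by simp⟩
        rw [hcfl, hr0]; simp
      · exact ⟨q, r, hrp, hcopqr, by rw [hcfl], hevqr⟩

/-- If `b₁, …, bₙ` (`n ≥ 1`) are nonzero even integers and `[b₁, …, bₙ] = p/q`
in lowest terms with `q > 0`, then the product `p·q` is even. (In Lean, `p` and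
`q` are the numerator and denominator of the rational number `cf l`.) -/
theorem stmt1 (l : List ℤ) (hne : l ≠ [])
    (hb : ∀ x ∈ l, x ≠ 0 ∧ Even x) :
    Even ((cf l).num * ((cf l).den : ℤ)) := by
  obtain ⟨p, q, hq, hcop, hcf, hev⟩ := cf_aux l hne hb
  rw [hcf, Rat.num_div_eq_of_coprime hq hcop, Rat.den_div_eq_of_coprime hq hcop]
  exact hev
end

section
/- Let b_1, …, b_n and c_1, …, c_m be two finite sequences of nonzero even integers such that [b_1, …, b_n] = [c_1, …, c_m] as rational numbers. Then n = m and b_i = c_i for every i. (That is, the continued fraction expansion with all denominators nonzero and even is unique.) -/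
lemma abs_two_le (b : ℤ) (hb0 : b ≠ 0) (hbe : Even b) : (2 : ℚ) ≤ |(b : ℚ)| := by
  have h : (2 : ℤ) ≤ |b| := by
    obtain ⟨k, rfl⟩ := hbe
    rcases abs_cases (k + k) with ⟨h, _⟩ | ⟨h, _⟩ <;> omega
  calc (2:ℚ) = ((2:ℤ):ℚ) := by norm_num
    _ ≤ ((|b|:ℤ):ℚ) := by exact_mod_cast h
    _ = |(b:ℚ)| := by push_cast; rfl

lemma denom_gt (b : ℤ) (r : ℚ) (hb0 : b ≠ 0) (hbe : Even b) (hr : |r| < 1) :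
    1 < |(b : ℚ) + r| := by
  have hb2 := abs_two_le b hb0 hbe
  have habs : |(b:ℚ)| ≤ |(b:ℚ) + r| + |r| := by
    calc |(b:ℚ)| = |((b:ℚ) + r) + (-r)| := by ring_nf
      _ ≤ |(b:ℚ) + r| + |(-r)| := abs_add_le _ _
      _ = |(b:ℚ) + r| + |r| := by rw [abs_neg]
  linarith

lemma cf_key : ∀ l : List ℤ, l ≠ [] → (∀ x ∈ l, x ≠ 0 ∧ Even x) →
    |cf l| < 1 ∧ cf l ≠ 0
  | [], h, _ => absurd rfl h
  | b :: t, _, hb => by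
    obtain ⟨hb0, hbe⟩ := hb b (List.mem_cons_self)
    have ht : |cf t| < 1 := by
      rcases eq_or_ne t [] with rfl | ht
      · simp [cf]
      · exact (cf_key t ht (fun x hx => hb x (List.mem_cons_of_mem _ hx))).1
    have hd : (1 : ℚ) < |(b : ℚ) + cf t| := denom_gt b (cf t) hb0 hbe ht
    constructor
    · show |1 / ((b : ℚ) + cf t)| < 1
      rw [abs_div, abs_one, div_lt_one (by linarith)]
      linarith
    · show 1 / ((b : ℚ) + cf t) ≠ 0
      have : (b : ℚ) + cf t ≠ 0 := by
        intro h; rw [h] at hd; simp at hd; linarith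
      simp [this]

/-- Uniqueness of the all-even continued fraction expansion: if two finite
sequences of nonzero even integers give the same continued fraction value, then
they have the same length and the same entries (i.e. they are equal as lists). -/
theorem stmt3 (l₁ l₂ : List ℤ) (h₁ : l₁ ≠ []) (h₂ : l₂ ≠ [])
    (hb₁ : ∀ x ∈ l₁, x ≠ 0 ∧ Even x) (hb₂ : ∀ x ∈ l₂, x ≠ 0 ∧ Even x)
    (heq : cf l₁ = cf l₂) : l₁ = l₂ := by
  induction l₁ generalizing l₂ with
  | nil => exact absurd rfl h₁
  | cons b t ih =>
    obtain ⟨c, s, rfl⟩ : ∃ c s, l₂ = c :: s := by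
      cases l₂ with
      | nil => exact absurd rfl h₂
      | cons c s => exact ⟨c, s, rfl⟩
    have hcfb : ∀ (u : List ℤ), (∀ x ∈ u, x ≠ 0 ∧ Even x) → |cf u| < 1 := by
      intro u hu
      rcases eq_or_ne u [] with rfl | hne
      · simp [cf]
      · exact (cf_key u hne hu).1
    have hbt : ∀ x ∈ t, x ≠ 0 ∧ Even x := fun x hx => hb₁ x (List.mem_cons_of_mem _ hx)
    have hcs : ∀ x ∈ s, x ≠ 0 ∧ Even x := fun x hx => hb₂ x (List.mem_cons_of_mem _ hx)
    have ht1 : |cf t| < 1 := hcfb t hbt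
    have hs1 : |cf s| < 1 := hcfb s hcs
    obtain ⟨hb0, hbe⟩ := hb₁ b (List.mem_cons_self)
    obtain ⟨hc0, hce⟩ := hb₂ c (List.mem_cons_self)
    have hdbgt : (1 : ℚ) < |(b : ℚ) + cf t| := denom_gt b (cf t) hb0 hbe ht1
    have hdcgt : (1 : ℚ) < |(c : ℚ) + cf s| := denom_gt c (cf s) hc0 hce hs1
    have hdb : (b : ℚ) + cf t ≠ 0 := by
      intro h; rw [h] at hdbgt; simp at hdbgt; linarith
    have hdc : (c : ℚ) + cf s ≠ 0 := by
      intro h; rw [h] at hdcgt; simp at hdcgt; linarith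
    have heq' : (b : ℚ) + cf t = (c : ℚ) + cf s := by
      have h : 1 / ((b : ℚ) + cf t) = 1 / ((c : ℚ) + cf s) := heq
      field_simp at h
      linarith [h]
    have hbc : b = c := by
      have hdiff : |(b : ℚ) - (c : ℚ)| < 2 := by
        have h : (b : ℚ) - c = cf s - cf t := by linarith
        rw [h]
        calc |cf s - cf t| ≤ |cf s| + |cf t| := abs_sub _ _
          _ < 2 := by linarith
      have hz : |b - c| < 2 := by
        have h : |((b - c : ℤ) : ℚ)| < 2 := by push_cast; exact hdiff
        exact_mod_cast h
      obtain ⟨k, hk⟩ := hbe.sub hce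
      rcases abs_cases (b - c) with ⟨h, _⟩ | ⟨h, _⟩ <;> omega
    subst hbc
    have hts : cf t = cf s := by
      have : (b : ℚ) + cf t = (b : ℚ) + cf s := heq'
      linarith
    congr 1
    rcases eq_or_ne t [] with rfl | htne
    · rcases eq_or_ne s [] with rfl | hsne
      · rfl
      · exact absurd (by rw [← hts]; rfl) (cf_key s hsne hcs).2
    · rcases eq_or_ne s [] with rfl | hsne
      · exact absurd (by rw [hts]; rfl) (cf_key t htne hbt).2
      · exact ih s htne hsne hbt hcs hts
end

section
/- Let n ≥ 1 and let b_1, …, b_n be nonzero even integers. Write [b_1, …, b_n] = p/q in lowest terms with q > 0. Then q is odd if and only if n is even. (The parity of the denominator of a rational number is opposite to the parity of the length of its even continued fraction expansion.) -/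
lemma cf_key_s4 : ∀ l : List ℤ, l ≠ [] → (∀ x ∈ l, x ≠ 0 ∧ Even x) →
    ∃ p q : ℤ, cf l = (p : ℚ) / q ∧ IsCoprime p q ∧ 0 < q ∧ |p| < q ∧
      (Even q ↔ Odd l.length) ∧ (Odd p ↔ Odd l.length) := by
  intro l
  induction l with
  | nil => intro h; exact absurd rfl h
  | cons b t ih =>
    intro _ hb
    obtain ⟨hb0, hbe⟩ := hb b List.mem_cons_self
    rcases eq_or_ne t [] with rfl | ht
    · -- base case: single element
      obtain ⟨c, hc⟩ := hbe
      have hcf1 : cf [b] = 1 / (b : ℚ) := by simp [cf]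
      rcases lt_or_gt_of_ne hb0 with hneg | hpos
      · refine ⟨-1, -b, ?_, ?_, by omega, ?_, ?_, ?_⟩
        · rw [hcf1]; push_cast; rw [neg_div_neg_eq, one_div]
        · simpa using (isCoprime_one_left (x := b)).neg_neg
        · rw [abs_neg, abs_one]; omega
        · simp only [List.length_cons, List.length_nil]
          exact ⟨fun _ => ⟨0, rfl⟩, fun _ => ⟨-c, by omega⟩⟩
        · exact ⟨fun _ => ⟨0, rfl⟩, fun _ => ⟨-1, by ring⟩⟩
      · refine ⟨1, b, ?_, isCoprime_one_left, hpos, ?_, ?_, ?_⟩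
        · rw [hcf1]; norm_num
        · rw [abs_one]; omega
        · simp only [List.length_cons, List.length_nil]
          exact ⟨fun _ => ⟨0, rfl⟩, fun _ => ⟨c, by omega⟩⟩
        · exact ⟨fun _ => ⟨0, rfl⟩, fun _ => ⟨0, by ring⟩⟩
    · obtain ⟨p, q, hcf, hcop, hq, hpq, hqpar, hppar⟩ :=
        ih ht (fun x hx => hb x (List.mem_cons_of_mem b hx))
      have hqQ : (q : ℚ) ≠ 0 := by exact_mod_cast hq.ne'
      obtain ⟨d, hd⟩ : ∃ d : ℤ, d = b * q + p := ⟨_, rfl⟩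
      have h2b : 2 ≤ |b| := by
        obtain ⟨c, hc⟩ := hbe; rcases lt_or_gt_of_ne hb0 with h | h <;>
          [rw [abs_of_neg h]; rw [abs_of_pos h]] <;> omega
      have habq : 2 * q ≤ |b * q| := by
        rw [abs_mul, abs_of_pos hq]
        exact mul_le_mul_of_nonneg_right h2b hq.le
      have htri : |b * q| ≤ |d| + |p| := by
        calc |b * q| = |d + -p| := by rw [hd]; ring_nf
        _ ≤ |d| + |-p| := abs_add_le _ _
        _ = |d| + |p| := by rw [abs_neg]
      have hdabs : q < |d| := by omega
      have hdne : d ≠ 0 := by intro h; rw [h, abs_zero] at hdabs; omega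
      have hdQ : (d : ℚ) ≠ 0 := by exact_mod_cast hdne
      have hsum : (b : ℚ) + cf t = (d : ℚ) / q := by
        rw [hcf, hd]; field_simp; push_cast; ring
      have hcfbt : cf (b :: t) = (q : ℚ) / d := by
        rw [cf, hsum, one_div_div]
      have hcop' : IsCoprime q d := by
        have h1 : IsCoprime q (p + q * b) := hcop.symm.add_mul_left_right b
        rwa [show p + q * b = d by rw [hd]; ring] at h1
      have hdpar : Even d ↔ Even p := by
        rw [hd, Int.even_add]
        simp [hbe.mul_right q]
      rcases lt_or_gt_of_ne hdne with hneg | hpos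
      · refine ⟨-q, -d, ?_, hcop'.neg_neg, by omega, ?_, ?_, ?_⟩
        · rw [hcfbt]; push_cast; rw [neg_div_neg_eq]
        · rw [abs_neg, abs_of_pos hq, ← abs_of_neg hneg]; exact hdabs
        · rw [even_neg, List.length_cons, Nat.odd_add_one, hdpar,
            ← Int.not_odd_iff_even, hppar, Nat.not_odd_iff_even]
        · rw [odd_neg, List.length_cons, Nat.odd_add_one, ← Int.not_even_iff_odd,
            hqpar, Nat.not_odd_iff_even]
      · refine ⟨q, d, hcfbt, hcop', hpos, ?_, ?_, ?_⟩
        · rw [abs_of_pos hq, ← abs_of_pos hpos]; exact hdabs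
        · rw [List.length_cons, Nat.odd_add_one, hdpar,
            ← Int.not_odd_iff_even, hppar, Nat.not_odd_iff_even]
        · rw [List.length_cons, Nat.odd_add_one, ← Int.not_even_iff_odd,
            hqpar, Nat.not_odd_iff_even]

/-- If `b₁, …, bₙ` (`n ≥ 1`) are nonzero even integers and `[b₁, …, bₙ] = p/q`
in lowest terms with `q > 0`, then `q` is odd if and only if `n` is even. -/
theorem stmt4 (l : List ℤ) (hne : l ≠ [])
    (hb : ∀ x ∈ l, x ≠ 0 ∧ Even x) :
    Odd (cf l).den ↔ Even l.length := by
  obtain ⟨p, q, hcf, hcop, hq, _, hqpar, _⟩ := cf_key_s4 l hne hb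
  have hden : ((cf l).den : ℤ) = q := by
    rw [hcf]
    exact Rat.den_div_eq_of_coprime hq (Int.isCoprime_iff_gcd_eq_one.mp hcop)
  have h1 : Odd (cf l).den ↔ Odd q := by
    rw [← hden, Int.odd_coe_nat]
  rw [h1, ← Int.not_even_iff_odd, hqpar, Nat.not_odd_iff_even]
end

section
/- Let p and q be coprime integers with 0 < |p| < q and with the product p·q even. Then there exist a nonzero even integer b and coprime integers p', q' with q' > 0, |p'| < q', q' < q, and p'·q' even, such that p/q = 1/(b + p'/q'). -/
/-- Descent step in the construction of the all-even continued fraction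
expansion: if `p`, `q` are coprime, `0 < |p| < q` and `p·q` is even, then there
are a nonzero even integer `b` and coprime integers `p'`, `q'` with `q' > 0`,
`|p'| < q'`, `q' < q`, `p'·q'` even, and `p/q = 1/(b + p'/q')`. -/
theorem stmt6 (p q : ℤ) (hcop : IsCoprime p q) (hp : 0 < |p|) (hpq : |p| < q)
    (heven : Even (p * q)) :
    ∃ (b p' q' : ℤ), b ≠ 0 ∧ Even b ∧ IsCoprime p' q' ∧ 0 < q' ∧ |p'| < q' ∧
      q' < q ∧ Even (p' * q') ∧
      (p : ℚ) / (q : ℚ) = 1 / ((b : ℚ) + (p' : ℚ) / (q' : ℚ)) := by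
  have hq : 0 < q := hp.trans hpq
  have hpne : p ≠ 0 := fun h => by simp [h] at hp
  set a := |p| with ha
  have ha0 : 0 < a := hp
  obtain ⟨s, hs1, hs2⟩ : ∃ s : ℤ, s * p = a ∧ s * s = 1 := by
    rcases le_or_gt 0 p with h | h
    · exact ⟨1, by simp [ha, abs_of_nonneg h], by ring⟩
    · exact ⟨-1, by rw [ha, abs_of_neg h]; ring, by ring⟩
  have hps : p = s * a := by
    have := congrArg (s * ·) hs1
    simp only [← mul_assoc, hs2, one_mul] at this
    exact this
  set m := (q * s) / a with hm
  set r := (q * s) % a with hr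
  have hdiv : a * m + r = q * s := Int.mul_ediv_add_emod (q * s) a
  have hr0 : 0 ≤ r := Int.emod_nonneg _ ha0.ne'
  have hr1 : r < a := Int.emod_lt_of_pos _ ha0
  set b := if Even m then m else m + 1 with hb
  have hbeven : Even b := by
    by_cases h : Even m
    · simpa [hb, h]
    · simp only [hb, if_neg h]
      exact Int.even_add_one.mpr h
  -- in the odd case the remainder is positive
  have hrpos : ¬ Even m → 0 < r := by
    intro hmo
    rcases hr0.lt_or_eq with h | h
    · exact h
    · exfalso
      have hdvd : a ∣ q * s := ⟨m, by linarith⟩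
      have hdq : a ∣ q := by
        have : q = (q * s) * s := by rw [mul_assoc, hs2, mul_one]
        rw [this]
        exact hdvd.mul_right s
      have hdp : a ∣ p := ⟨s, by rw [hps]; ring⟩
      have hunit : IsUnit a := hcop.isUnit_of_dvd' hdp hdq
      have ha1 : a = 1 := by
        rcases Int.isUnit_iff.mp hunit with h1 | h1
        · exact h1
        · omega
      -- then p = ± 1 is odd, so q is even, so m = q * s is even
      have hqeven : Even q := by
        rcases heven with ⟨k, hk⟩
        have hpp : p * p = a * a := by
          have : (s * p) * (s * p) = a * a := by rw [hs1]
          calc p * p = (s * s) * (p * p) := by rw [hs2]; ring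
            _ = a * a := by linear_combination this
        have h2 : a * a * q = p * k + p * k := by linear_combination p * hk - q * hpp
        rw [ha1] at h2
        exact ⟨p * k, by linarith⟩
      apply hmo
      have hma : m = q * s := by
        rw [hm, ha1, Int.ediv_one]
      rcases hqeven with ⟨k, hk⟩
      exact ⟨k * s, by rw [hma, hk]; ring⟩
  have hp'bound : |q * s - b * a| < a := by
    by_cases h : Even m
    · rw [hb, if_pos h]
      have : q * s - m * a = r := by linarith
      rw [this, abs_of_nonneg hr0]; exact hr1
    · rw [hb, if_neg h]
      have h2 : q * s - (m + 1) * a = r - a := by ring_nf; linarith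
      rw [h2]
      have := hrpos h
      rw [abs_of_nonpos (by linarith)]
      linarith
  have hbne : b ≠ 0 := by
    intro h0
    rw [h0] at hp'bound
    simp at hp'bound
    have habs : |q * s| = q := by
      rw [abs_mul, abs_of_pos hq]
      have : |s| = 1 := by
        rcases Int.isUnit_iff.mp (IsUnit.of_mul_eq_one s hs2) with h1 | h1 <;> simp [h1]
      rw [this, mul_one]
    rw [← abs_mul, habs] at hp'bound
    linarith
  refine ⟨b, q * s - b * a, a, hbne, hbeven, ?_, ha0, hp'bound, hpq, ?_, ?_⟩
  · -- coprimality
    have hcps : ∀ x : ℤ, IsCoprime s x := fun x => ⟨s, 0, by simpa using hs2⟩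
    have h1 : IsCoprime (q * s) p := hcop.symm.mul_left (hcps p)
    have h2 : IsCoprime (q * s) a := by
      have := ((hcps (q * s)).symm).mul_right h1
      rwa [hs1] at this
    have h3 : q * s - b * a = q * s + a * (-b) := by ring
    rw [h3]
    exact h2.add_mul_left_left (-b)
  · -- evenness
    have h1 : (q * s - b * a) * a = p * q - b * (a * a) := by
      rw [hps]; ring
    rw [h1]
    exact heven.sub (hbeven.mul_right _)
  · -- the equation
    have hane : (a : ℚ) ≠ 0 := Int.cast_ne_zero.mpr ha0.ne'
    have hsne : s ≠ 0 := fun h => by simp [h] at hs2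
    have hqsne : (q : ℚ) * s ≠ 0 := by
      push_cast
      exact mul_ne_zero (Int.cast_ne_zero.mpr hq.ne') (Int.cast_ne_zero.mpr hsne)
    have key : (b : ℚ) + ((q * s - b * a : ℤ) : ℚ) / (a : ℚ) = (q * s : ℤ) / a := by
      push_cast
      field_simp
      ring
    rw [key]
    rw [one_div_div]
    rw [div_eq_div_iff (Int.cast_ne_zero.mpr hq.ne') (by push_cast at hqsne ⊢; exact hqsne)]
    have : p * (q * s) = a * q := by rw [← hs1]; ring
    exact_mod_cast this
end

section
/- Let R be a commutative ring, let z be an indeterminate, let (l_i)_{i≥1} and (r_i)_{i≥1} be elements of R, and let x_{−1}, x_0 ∈ R. Define x_n ∈ R[z] for n ≥ 1 recursively by x_n = z·l_n·x_{n−1} + r_n·x_{n−2}. Let C be the set of all strictly decreasing finite integer sequences c = (c_1, c_2, …, c_l) with c_1 = n, c_i − c_{i+1} ∈ {1, 2} for all i, c_l ∈ {0, −1}, and such that if c_l = −1 then c_{l−1} ≠ 0. For c ∈ C set 𝓁(c) = {i : c_i − c_{i+1} = 1}, 𝓇(c) = {i : c_i − c_{i+1} = 2}, and k(c) = |𝓁(c)|.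 Then x_n = Σ_{c ∈ C} z^{k(c)} · x_{c_l} · Π_{i ∈ 𝓁(c)} l_{c_i} · Π_{i ∈ 𝓇(c)} r_{c_i}. -/
open Polynomial

/-- The set `C` of strictly decreasing integer sequences `c = (c₁, …, c_l)` with
`c₁ = n`, consecutive differences `cᵢ − cᵢ₊₁ ∈ {1, 2}`, last entry `c_l ∈ {0, −1}`,
and such that only one of `0`, `−1` occurs (if `c_l = −1` then `c_{l−1} ≠ 0`,
which, the sequence being decreasing with steps `1` or `2`, means `0 ∉ c`). -/
def CSeq (n : ℤ) : Set (List ℤ) :=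
  {c | c.Chain' (fun a b => a - b = 1 ∨ a - b = 2) ∧ c.head? = some n ∧
        (c.getLast? = some 0 ∨ (c.getLast? = some (-1) ∧ (0 : ℤ) ∉ c))}

/-- `𝓁(c)`: the (values `cᵢ` at the) positions `i` with `cᵢ − cᵢ₊₁ = 1`,
listed as the first components of consecutive pairs of `c` with difference 1. -/
def lSteps (c : List ℤ) : List (ℤ × ℤ) := (c.zip c.tail).filter (fun p => p.1 - p.2 = 1)

/-- `𝓇(c)`: the consecutive pairs of `c` with difference 2. -/
def rSteps (c : List ℤ) : List (ℤ × ℤ) := (c.zip c.tail).filter (fun p => p.1 - p.2 = 2)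

/-- `k(c) = |𝓁(c)|`. -/
def kOf (c : List ℤ) : ℕ := (lSteps c).length

open List
lemma mem_of_getLast' {l : List ℤ} {v : ℤ} (h : l.getLast? = some v) : v ∈ l := by
  obtain ⟨h1, h2⟩ := List.mem_getLast?_eq_getLast (l := l) (x := v) (by simp [Option.mem_def, h])
  exact h2 ▸ List.getLast_mem h1

lemma chain_lt {a : ℤ} {t : List ℤ}
    (h : (a :: t).Chain' (fun a b => a - b = 1 ∨ a - b = 2)) : ∀ b ∈ t, b < a := by
  have h' : (a :: t).Chain' (· > ·) := h.imp (by intro a b hab; omega)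
  replace h' := List.pairwise_cons.mp (List.isChain_iff_pairwise.mp h')
  exact fun b hb => h'.1 b hb

lemma cseq_zero : CSeq 0 = {[0]} := by
  ext c
  constructor
  · rintro ⟨hch, hhd, hlast⟩
    match c with
    | [] => simp at hhd
    | a :: t =>
      simp only [List.head?_cons, Option.some.injEq] at hhd
      subst hhd
      match t with
      | [] => rfl
      | b :: t' =>
        exfalso
        have hbt : b < 0 := chain_lt hch b (by simp)
        have htlt := chain_lt hch
        rcases hlast with h0 | ⟨hm1, hnot⟩
        · rw [List.getLast?_cons_cons] at h0
          have := htlt 0 (mem_of_getLast' h0)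
          omega
        · exact hnot (by simp)
  · rintro rfl
    refine ⟨List.isChain_singleton _, by simp, Or.inl (by simp)⟩

lemma cseq_neg_one : CSeq (-1) = {[-1]} := by
  ext c
  constructor
  · rintro ⟨hch, hhd, hlast⟩
    match c with
    | [] => simp at hhd
    | a :: t =>
      simp only [List.head?_cons, Option.some.injEq] at hhd
      subst hhd
      match t with
      | [] => rfl
      | b :: t' =>
        exfalso
        have htlt := chain_lt hch
        rcases hlast with h0 | ⟨hm1, hnot⟩
        · rw [List.getLast?_cons_cons] at h0
          have := htlt 0 (mem_of_getLast' h0)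
          have hb := htlt b (by simp)
          have := chain_lt (List.isChain_cons_cons.mp hch).2 0 (by
            rcases List.mem_cons.mp (mem_of_getLast' h0) with h | h
            · omega
            · exact h)
          omega
        · rw [List.getLast?_cons_cons] at hm1
          have := htlt (-1) (mem_of_getLast' hm1)
          omega
  · rintro rfl
    refine ⟨List.isChain_singleton _, by simp, Or.inr ⟨by simp, by simp⟩⟩

lemma cseq_neg {n : ℤ} (hn : n ≤ -2) : CSeq n = ∅ := by
  ext c
  simp only [Set.mem_empty_iff_false, iff_false]
  rintro ⟨hch, hhd, hlast⟩
  match c with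
  | [] => simp at hhd
  | a :: t =>
    simp only [List.head?_cons, Option.some.injEq] at hhd
    subst hhd
    have htlt := chain_lt hch
    rcases hlast with h0 | ⟨hm1, hnot⟩
    · rcases List.mem_cons.mp (mem_of_getLast' h0) with h | h
      · omega
      · have := htlt 0 h; omega
    · rcases List.mem_cons.mp (mem_of_getLast' hm1) with h | h
      · omega
      · have := htlt (-1) h; omega

lemma cseq_decomp {n : ℤ} (hn : 1 ≤ n) :
    CSeq n = (List.cons n '' CSeq (n - 1)) ∪ (List.cons n '' CSeq (n - 2)) := by
  ext c
  constructor
  · rintro ⟨hch, hhd, hlast⟩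
    match c with
    | [] => simp at hhd
    | a :: t =>
      simp only [List.head?_cons, Option.some.injEq] at hhd
      subst a
      match t with
      | [] =>
        exfalso
        rcases hlast with h0 | ⟨hm1, _⟩ <;> simp only [List.getLast?_singleton,
          Option.some.injEq] at * <;> omega
      | b :: t' =>
        have hstep : n - b = 1 ∨ n - b = 2 := (List.isChain_cons_cons.mp hch).1
        have hmem : b :: t' ∈ CSeq b := by
          refine ⟨(List.isChain_cons_cons.mp hch).2, by simp, ?_⟩
          rw [List.getLast?_cons_cons] at hlast
          rcases hlast with h0 | ⟨hm1, hnot⟩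
          · exact Or.inl h0
          · exact Or.inr ⟨hm1, fun hc => hnot (by simp [hc])⟩
        rcases hstep with h | h
        · left; exact ⟨b :: t', by rwa [show n - 1 = b by omega], rfl⟩
        · right; exact ⟨b :: t', by rwa [show n - 2 = b by omega], rfl⟩
  · rintro (⟨c', ⟨hch, hhd, hlast⟩, rfl⟩ | ⟨c', ⟨hch, hhd, hlast⟩, rfl⟩) <;>
    · match c' with
      | [] => simp at hhd
      | a :: t =>
        simp only [List.head?_cons, Option.some.injEq] at hhd
        subst hhd
        refine ⟨List.isChain_cons_cons.mpr ⟨by omega, hch⟩, by simp, ?_⟩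
        rw [List.getLast?_cons_cons]
        rcases hlast with h0 | ⟨hm1, hnot⟩
        · exact Or.inl h0
        · refine Or.inr ⟨hm1, ?_⟩
          simp only [List.mem_cons, not_or] at hnot ⊢
          exact ⟨by omega, hnot⟩

lemma cseq_finite_aux : ∀ k : ℕ, ∀ n : ℤ, n ≤ k → (CSeq n).Finite := by
  intro k
  induction k using Nat.strong_induction_on with
  | _ k ih =>
    intro n hn
    rcases lt_trichotomy n 0 with h | rfl | h
    · rcases eq_or_lt_of_le (show n ≤ -1 by omega) with rfl | h2
      · rw [cseq_neg_one]; exact Set.finite_singleton _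
      · rw [cseq_neg (by omega)]; exact Set.finite_empty
    · rw [cseq_zero]; exact Set.finite_singleton _
    · rw [cseq_decomp h]
      have hk : 1 ≤ k := by omega
      have h1 : (CSeq (n - 1)).Finite := ih (k - 1) (by omega) _ (by omega)
      have h2 : (CSeq (n - 2)).Finite := ih (k - 1) (by omega) _ (by omega)
      exact (h1.image _).union (h2.image _)

lemma cseq_finite (n : ℤ) : (CSeq n).Finite := by
  rcases le_or_gt n 0 with h | h
  · exact cseq_finite_aux 0 n (by omega)
  · exact cseq_finite_aux n.toNat n (by omega)

section
variable {R : Type*} [CommRing R] (l r : ℤ → R) (x : ℤ → Polynomial R)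

noncomputable def fTerm (c : List ℤ) : Polynomial R :=
  X ^ kOf c * x (c.getLastD 0) *
    C (((lSteps c).map (fun p => l p.1)).prod) *
    C (((rSteps c).map (fun p => r p.1)).prod)

lemma fTerm_cons_one {n m : ℤ} {c : List ℤ} (hc : c.head? = some m) (h : n - m = 1) :
    fTerm l r x (n :: c) = X * C (l n) * fTerm l r x c := by
  match c with
  | [] => simp at hc
  | a :: t =>
    simp only [List.head?_cons, Option.some.injEq] at hc
    subst hc
    simp only [fTerm, lSteps, rSteps, kOf, List.zip_cons_cons, List.tail_cons,
      List.filter_cons, h, List.getLastD_cons]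
    norm_num
    ring

lemma fTerm_cons_two {n m : ℤ} {c : List ℤ} (hc : c.head? = some m) (h : n - m = 2) :
    fTerm l r x (n :: c) = C (r n) * fTerm l r x c := by
  match c with
  | [] => simp at hc
  | a :: t =>
    simp only [List.head?_cons, Option.some.injEq] at hc
    subst hc
    simp only [fTerm, lSteps, rSteps, kOf, List.zip_cons_cons, List.tail_cons,
      List.filter_cons, h, List.getLastD_cons]
    norm_num
    ring

end

lemma finsum_mem_mul_left {α M : Type*} [NonUnitalNonAssocSemiring M] {s : Set α}
    (hs : s.Finite) (a : M) (g : α → M) :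
    ∑ᶠ i ∈ s, a * g i = a * ∑ᶠ i ∈ s, g i := by
  rw [← hs.coe_toFinset, finsum_mem_coe_finset, finsum_mem_coe_finset, Finset.mul_sum]

lemma key {R : Type*} [CommRing R] (l r : ℤ → R) (x : ℤ → Polynomial R)
    (hrec : ∀ m : ℤ, 1 ≤ m →
      x m = X * C (l m) * x (m - 1) + C (r m) * x (m - 2)) :
    ∀ k : ℕ, ∀ n : ℤ, -1 ≤ n → n ≤ k → x n = ∑ᶠ c ∈ CSeq n, fTerm l r x c := by
  intro k
  induction k using Nat.strong_induction_on with
  | _ k ih =>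
    intro n hn1 hn2
    rcases lt_or_ge n 1 with h | h
    · interval_cases n
      · rw [cseq_neg_one, finsum_mem_singleton]
        simp [fTerm, kOf, lSteps, rSteps]
      · rw [cseq_zero, finsum_mem_singleton]
        simp [fTerm, kOf, lSteps, rSteps]
    · have hk : 1 ≤ k := by omega
      have disj : Disjoint (List.cons n '' CSeq (n - 1)) (List.cons n '' CSeq (n - 2)) := by
        rw [Set.disjoint_left]
        rintro a ⟨c1, hc1, rfl⟩ ⟨c2, hc2, heq⟩
        obtain rfl : c2 = c1 := by injection heq
        have h1 := hc1.2.1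
        have h2 := hc2.2.1
        rw [h1] at h2
        simp only [Option.some.injEq] at h2
        omega
      have inj1 : (CSeq (n - 1)).InjOn (List.cons n) := fun a _ b _ hab => by injection hab
      have inj2 : (CSeq (n - 2)).InjOn (List.cons n) := fun a _ b _ hab => by injection hab
      have e1 : ∑ᶠ c ∈ CSeq (n - 1), fTerm l r x (n :: c)
          = ∑ᶠ c ∈ CSeq (n - 1), X * C (l n) * fTerm l r x c :=
        finsum_mem_congr rfl fun c hc => fTerm_cons_one l r x hc.2.1 (by omega)
      have e2 : ∑ᶠ c ∈ CSeq (n - 2), fTerm l r x (n :: c)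
          = ∑ᶠ c ∈ CSeq (n - 2), C (r n) * fTerm l r x c :=
        finsum_mem_congr rfl fun c hc => fTerm_cons_two l r x hc.2.1 (by omega)
      rw [cseq_decomp h,
        finsum_mem_union disj ((cseq_finite _).image _) ((cseq_finite _).image _),
        finsum_mem_image inj1, finsum_mem_image inj2, e1, e2,
        finsum_mem_mul_left (cseq_finite _), finsum_mem_mul_left (cseq_finite _),
        ← ih (k - 1) (by omega) (n - 1) (by omega) (by omega),
        ← ih (k - 1) (by omega) (n - 2) (by omega) (by omega)]
      exact hrec n h


/-- Closed form for the solution of the two-step recursion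
`xₙ = z·lₙ·xₙ₋₁ + rₙ·xₙ₋₂` in `R[z]`, as a sum over the computational tree:
`xₙ = Σ_{c ∈ C} z^{k(c)} · x_{c_l} · Π_{i ∈ 𝓁(c)} l_{cᵢ} · Π_{i ∈ 𝓇(c)} r_{cᵢ}`. -/
theorem stmt7 {R : Type*} [CommRing R] (l r : ℤ → R) (xZero xNegOne : R)
    (x : ℤ → Polynomial R) (h0 : x 0 = C xZero) (hneg : x (-1) = C xNegOne)
    (hrec : ∀ m : ℤ, 1 ≤ m →
      x m = X * C (l m) * x (m - 1) + C (r m) * x (m - 2))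
    (n : ℤ) (hn : 1 ≤ n) :
    x n = ∑ᶠ c ∈ CSeq n,
      X ^ kOf c * x (c.getLastD 0) *
        C (((lSteps c).map (fun p => l p.1)).prod) *
        C (((rSteps c).map (fun p => r p.1)).prod) := by
  exact key l r x hrec n.toNat n (by omega) (by omega)
end

section
/- Let R be a commutative ring, let z be an indeterminate, let (l_i)_{i≥1} and (r_i)_{i≥1} be elements of R, and let x_{−1}, x_0 ∈ R. Define x_n ∈ R[z] for n ≥ 1 recursively by x_n = z·l_n·x_{n−1} + r_n·x_{n−2}. For a subset C ⊆ {1, …, n} write C − 1 = {c − 1 : c ∈ C}, and set e(C) = −1 if 1 ∈ C and e(C) = 0 otherwise, and k(C) = n − 2|C| + (1 if 1 ∈ C, else 0). Then x_n = Σ_C z^{k(C)} · x_{e(C)} · Π_{m ∈ C} r_m · Π_{m ∈ {1,…,n} \ (C ∪ (C−1))} l_m, where the sum is over all subsets C ⊆ {1, …, n} with C ∩ (C − 1) = ∅. -/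
open Polynomial

namespace Stmt8Aux

open Finset

/-- The index set: valid (non-adjacent) subsets of `{1, …, N}`. -/
def S (N : ℕ) : Finset (Finset ℕ) :=
  (Finset.Icc 1 N).powerset.filter (fun s => s ∩ s.image (· - 1) = ∅)

lemma mem_S {N : ℕ} {s : Finset ℕ} :
    s ∈ S N ↔ s ⊆ Finset.Icc 1 N ∧ s ∩ s.image (· - 1) = ∅ := by
  simp [S]

variable {R : Type*} [CommRing R]

/-- One term of the closed form. -/
noncomputable def T (l r : ℕ → R) (x : ℤ → Polynomial R) (N : ℕ) (s : Finset ℕ) : Polynomial R :=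
  X ^ ((N + if 1 ∈ s then 1 else 0) - 2 * s.card) *
    x (if 1 ∈ s then -1 else 0) *
    C (∏ m ∈ s, r m) *
    C (∏ m ∈ Finset.Icc 1 N \ (s ∪ s.image (· - 1)), l m)

/-- The closed form. -/
noncomputable def F (l r : ℕ → R) (x : ℤ → Polynomial R) (N : ℕ) : Polynomial R :=
  ∑ s ∈ S N, T l r x N s

lemma valid_not_adj {s : Finset ℕ} (h : s ∩ s.image (· - 1) = ∅)
    {a : ℕ} (ha : a ∈ s) (ha1 : a + 1 ∈ s) : False := by
  have : a ∈ s ∩ s.image (· - 1) := by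
    refine mem_inter.2 ⟨ha, mem_image.2 ⟨a + 1, ha1, by omega⟩⟩
  simp [h] at this

lemma card_bound {N : ℕ} {s : Finset ℕ} (hs : s ⊆ Finset.Icc 1 N)
    (hv : s ∩ s.image (· - 1) = ∅) :
    2 * s.card ≤ N + if 1 ∈ s then 1 else 0 := by
  classical
  have hinj : Set.InjOn (· - 1) s := by
    intro a ha b hb hab
    have h1 := mem_Icc.1 (hs ha)
    have h2 := mem_Icc.1 (hs hb)
    simp only at hab
    omega
  have hcard : (s ∪ s.image (· - 1)).card = 2 * s.card := by
    rw [card_union_of_disjoint (disjoint_iff_inter_eq_empty.2 hv),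
      card_image_of_injOn hinj]
    ring
  by_cases h1 : 1 ∈ s
  · have hsub : s ∪ s.image (· - 1) ⊆ Finset.Icc 0 N := by
      intro a ha
      rcases mem_union.1 ha with h | h
      · have := mem_Icc.1 (hs h); exact mem_Icc.2 (by omega)
      · obtain ⟨b, hb, rfl⟩ := mem_image.1 h
        have := mem_Icc.1 (hs hb); exact mem_Icc.2 (by omega)
    have hle := card_le_card hsub
    rw [hcard, Nat.card_Icc] at hle
    simp only [h1, if_pos]
    omega
  · have hsub : s ∪ s.image (· - 1) ⊆ Finset.Icc 1 N := by
      intro a ha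
      rcases mem_union.1 ha with h | h
      · exact hs h
      · obtain ⟨b, hb, rfl⟩ := mem_image.1 h
        have hb2 := mem_Icc.1 (hs hb)
        have : b ≠ 1 := fun hb1 => h1 (hb1 ▸ hb)
        exact mem_Icc.2 (by omega)
    have hle := card_le_card hsub
    rw [hcard, Nat.card_Icc] at hle
    simp only [h1, if_neg, Nat.not_lt]
    omega

lemma F_one (l r : ℕ → R) (x : ℤ → Polynomial R) :
    F l r x 1 = X * C (l 1) * x 0 + C (r 1) * x (-1) := by
  have hS : S 1 = {∅, {1}} := by decide
  rw [F, hS, Finset.sum_pair (by decide)]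
  have h1 : Finset.Icc 1 1 \ ((∅ : Finset ℕ) ∪ (∅ : Finset ℕ).image (· - 1)) = {1} := by decide
  have h2 : Finset.Icc 1 1 \ (({1} : Finset ℕ) ∪ ({1} : Finset ℕ).image (· - 1)) = ∅ := by decide
  simp [T, h1, h2]
  rw [show ({1} : Finset ℕ) \ {1, 0} = ∅ by decide]
  simp
  ring

lemma F_two (l r : ℕ → R) (x : ℤ → Polynomial R) :
    F l r x 2 = X * C (l 2) * F l r x 1 + C (r 2) * x 0 := by
  have hS : S 2 = {∅, {1}, {2}} := by decide
  rw [F, hS, Finset.sum_insert (by decide), Finset.sum_pair (by decide), F_one]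
  have h1 : Finset.Icc 1 2 \ ((∅ : Finset ℕ) ∪ (∅ : Finset ℕ).image (· - 1)) = {1, 2} := by decide
  have h2 : Finset.Icc 1 2 \ (({1} : Finset ℕ) ∪ ({1} : Finset ℕ).image (· - 1)) = {2} := by decide
  have h3 : Finset.Icc 1 2 \ (({2} : Finset ℕ) ∪ ({2} : Finset ℕ).image (· - 1)) = ∅ := by decide
  simp [T, h1, h2, h3]
  rw [show Finset.Icc 1 2 \ {1, 0} = ({2} : Finset ℕ) by decide,
    show Finset.Icc 1 2 \ {2, 1} = (∅ : Finset ℕ) by decide,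
    show Finset.Icc 1 2 = ({1, 2} : Finset ℕ) by decide,
    Finset.prod_pair (by decide), Finset.prod_singleton, Finset.prod_empty]
  ring

lemma F_rec (l r : ℕ → R) (x : ℤ → Polynomial R) {N : ℕ} (hN : 3 ≤ N) :
    F l r x N = X * C (l N) * F l r x (N - 1) + C (r N) * F l r x (N - 2) := by
  classical
  have hsplit := Finset.sum_filter_add_sum_filter_not (S N) (fun s => N ∉ s) (T l r x N)
  rw [F, ← hsplit]
  congr 1
  · -- part A : sets not containing N
    have hset : (S N).filter (fun s => N ∉ s) = S (N - 1) := by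
      ext s
      simp only [Finset.mem_filter, mem_S]
      constructor
      · rintro ⟨⟨hs, hv⟩, hns⟩
        refine ⟨fun a ha => ?_, hv⟩
        have h1 := mem_Icc.1 (hs ha)
        have h2 : a ≠ N := fun h => hns (h ▸ ha)
        exact mem_Icc.2 (by omega)
      · rintro ⟨hs, hv⟩
        refine ⟨⟨fun a ha => ?_, hv⟩, fun hns => ?_⟩
        · have := mem_Icc.1 (hs ha); exact mem_Icc.2 (by omega)
        · have := mem_Icc.1 (hs hns); omega
    rw [hset, F, Finset.mul_sum]
    refine Finset.sum_congr rfl fun s hs => ?_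
    obtain ⟨hsub, hv⟩ := mem_S.1 hs
    have hb := card_bound hsub hv
    have hnotin : N ∉ s ∪ s.image (· - 1) := by
      intro h
      rcases mem_union.1 h with h | h
      · have := mem_Icc.1 (hsub h); omega
      · obtain ⟨b, hb', hb2⟩ := mem_image.1 h
        have := mem_Icc.1 (hsub hb'); omega
    have hIcc : Finset.Icc 1 N \ (s ∪ s.image (· - 1))
        = insert N (Finset.Icc 1 (N - 1) \ (s ∪ s.image (· - 1))) := by
      ext a
      simp only [mem_sdiff, mem_Icc, mem_insert]
      constructor
      · rintro ⟨⟨ha1, ha2⟩, ha3⟩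
        rcases eq_or_ne a N with rfl | hne
        · exact Or.inl rfl
        · exact Or.inr ⟨⟨ha1, by omega⟩, ha3⟩
      · rintro (rfl | ⟨⟨ha1, ha2⟩, ha3⟩)
        · exact ⟨⟨by omega, le_rfl⟩, fun h => hnotin (by simpa using h)⟩
        · exact ⟨⟨ha1, by omega⟩, ha3⟩
    have hNmem : N ∉ Finset.Icc 1 (N - 1) \ (s ∪ s.image (· - 1)) := by
      intro h
      have := mem_Icc.1 (mem_sdiff.1 h).1; omega
    have hexp : (N + if 1 ∈ s then 1 else 0) - 2 * s.card
        = ((N - 1 + if 1 ∈ s then 1 else 0) - 2 * s.card) + 1 := by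
      by_cases h1 : 1 ∈ s <;> simp only [h1, if_true, if_false] at hb ⊢ <;> omega
    rw [T, T, hIcc, Finset.prod_insert hNmem, hexp, pow_succ, C_mul]
    ring
  · -- part B : sets containing N
    rw [F, Finset.mul_sum]
    refine Finset.sum_nbij' (fun s => s.erase N) (fun t => insert N t) ?_ ?_ ?_ ?_ ?_
    · intro s hs
      obtain ⟨hmem, hNs⟩ := Finset.mem_filter.1 hs
      rw [not_not] at hNs
      obtain ⟨hsub, hv⟩ := mem_S.1 hmem
      have hN1 : N - 1 ∉ s := fun h =>
        valid_not_adj hv h (by rwa [show N - 1 + 1 = N by omega])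
      refine mem_S.2 ⟨fun a ha => ?_, ?_⟩
      · obtain ⟨hane, has⟩ := mem_erase.1 ha
        have h1 := mem_Icc.1 (hsub has)
        have h2 : a ≠ N - 1 := fun h => hN1 (h ▸ has)
        exact mem_Icc.2 (by omega)
      · have hsub2 : (s.erase N) ∩ (s.erase N).image (· - 1) ⊆ s ∩ s.image (· - 1) :=
          inter_subset_inter (erase_subset _ _) (image_subset_image (erase_subset _ _))
        rw [hv] at hsub2
        exact subset_empty.1 hsub2
    · intro t ht
      obtain ⟨htsub, htv⟩ := mem_S.1 ht
      refine Finset.mem_filter.2 ⟨mem_S.2 ⟨?_, ?_⟩, by simp⟩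
      · intro a ha
        rcases mem_insert.1 ha with rfl | ha
        · exact mem_Icc.2 ⟨by omega, le_rfl⟩
        · have := mem_Icc.1 (htsub ha); exact mem_Icc.2 (by omega)
      · rw [Finset.eq_empty_iff_forall_notMem]
        intro a ha
        obtain ⟨ha1, ha2⟩ := mem_inter.1 ha
        rw [Finset.image_insert] at ha2
        rcases mem_insert.1 ha1 with rfl | ha1
        · rcases mem_insert.1 ha2 with h | h
          · omega
          · obtain ⟨b, hb, hb2⟩ := mem_image.1 h
            have := mem_Icc.1 (htsub hb); omega
        · rcases mem_insert.1 ha2 with rfl | h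
          · have := mem_Icc.1 (htsub ha1); omega
          · exact Finset.eq_empty_iff_forall_notMem.1 htv a (mem_inter.2 ⟨ha1, h⟩)
    · intro s hs
      obtain ⟨_, hNs⟩ := Finset.mem_filter.1 hs
      rw [not_not] at hNs
      exact Finset.insert_erase hNs
    · intro t ht
      obtain ⟨htsub, _⟩ := mem_S.1 ht
      have hNt : N ∉ t := fun h => by have := mem_Icc.1 (htsub h); omega
      exact Finset.erase_insert hNt
    · intro s hs
      obtain ⟨hmem, hNs⟩ := Finset.mem_filter.1 hs
      rw [not_not] at hNs
      obtain ⟨hsub, hv⟩ := mem_S.1 hmem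
      have hN1 : N - 1 ∉ s := fun h =>
        valid_not_adj hv h (by rwa [show N - 1 + 1 = N by omega])
      have h1iff : (1 ∈ s.erase N) ↔ (1 ∈ s) := by
        rw [mem_erase]
        exact ⟨And.right, fun h => ⟨by omega, h⟩⟩
      have hcard : s.card = (s.erase N).card + 1 := by
        rw [card_erase_of_mem hNs]
        have : 0 < s.card := card_pos.2 ⟨N, hNs⟩
        omega
      have hprodr : ∏ m ∈ s, r m = r N * ∏ m ∈ s.erase N, r m :=
        (Finset.mul_prod_erase s r hNs).symm
      have hsets : Finset.Icc 1 N \ (s ∪ s.image (· - 1))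
          = Finset.Icc 1 (N - 2) \ ((s.erase N) ∪ (s.erase N).image (· - 1)) := by
        ext a
        simp only [mem_sdiff, mem_Icc, mem_union, mem_image, mem_erase]
        constructor
        · rintro ⟨⟨ha1, ha2⟩, ha3⟩
          push_neg at ha3
          obtain ⟨ha4, ha5⟩ := ha3
          have haN : a ≠ N := fun h => ha4 (h ▸ hNs)
          have haN1 : a ≠ N - 1 := fun h => ha5 N hNs h.symm
          refine ⟨⟨ha1, by omega⟩, ?_⟩
          rintro (⟨_, h⟩ | ⟨b, ⟨_, hb⟩, hb2⟩)
          · exact ha4 h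
          · exact ha5 b hb hb2
        · rintro ⟨⟨ha1, ha2⟩, ha3⟩
          refine ⟨⟨ha1, by omega⟩, ?_⟩
          rintro (h | ⟨b, hb, hb2⟩)
          · exact ha3 (Or.inl ⟨by omega, h⟩)
          · rcases eq_or_ne b N with rfl | hbne
            · omega
            · exact ha3 (Or.inr ⟨b, ⟨hbne, hb⟩, hb2⟩)
      have hif2 : (if 1 ∈ s.erase N then (-1 : ℤ) else 0) = (if 1 ∈ s then -1 else 0) := by
        simp [h1iff]
      have hexp : (N + if 1 ∈ s then 1 else 0) - 2 * s.card
          = (N - 2 + if 1 ∈ s.erase N then 1 else 0) - 2 * (s.erase N).card := by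
        rw [hcard]
        by_cases h1 : 1 ∈ s <;>
          simp only [h1iff, h1, if_true, if_false] <;> omega
      rw [T, T, hif2, hsets, hprodr, C_mul, hexp]
      ring

end Stmt8Aux

/-- Closed form for the solution of the two-step recursion
`xₙ = z·lₙ·xₙ₋₁ + rₙ·xₙ₋₂` in `R[z]`, with terms collected according to the set
`C ⊆ {1, …, n}` (with `C ∩ (C−1) = ∅`) of indices where the two-step factor `r`
is used:
`xₙ = Σ_C z^{k(C)} · x_{e(C)} · Π_{m ∈ C} r_m · Π_{m ∈ {1,…,n} ∖ (C ∪ (C−1))} l_m`,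
where `e(C) = −1` if `1 ∈ C` and `0` otherwise, and
`k(C) = n − 2|C| + (1 if 1 ∈ C else 0)`. -/
theorem stmt8 {R : Type*} [CommRing R] (n : ℕ) (hn : 1 ≤ n) (l r : ℕ → R)
    (xZero xNegOne : R)
    (x : ℤ → Polynomial R) (h0 : x 0 = C xZero) (hneg : x (-1) = C xNegOne)
    (hrec : ∀ m : ℕ, 1 ≤ m →
      x m = X * C (l m) * x ((m : ℤ) - 1) + C (r m) * x ((m : ℤ) - 2)) :
    x n = ∑ s ∈ (Finset.Icc 1 n).powerset.filter (fun s => s ∩ s.image (· - 1) = ∅),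
      X ^ ((n + if 1 ∈ s then 1 else 0) - 2 * s.card) *
        x (if 1 ∈ s then -1 else 0) *
        C (∏ m ∈ s, r m) *
        C (∏ m ∈ Finset.Icc 1 n \ (s ∪ s.image (· - 1)), l m) := by
  have key : ∀ N : ℕ, 1 ≤ N → x N = Stmt8Aux.F l r x N := by
    intro N
    induction N using Nat.strong_induction_on with
    | _ N ih =>
      intro hN
      rcases Nat.lt_or_ge N 3 with h3 | h3
      · have h1 : x 1 = Stmt8Aux.F l r x 1 := by
          have h := hrec 1 le_rfl
          norm_num at h
          rw [h, Stmt8Aux.F_one]; ring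
        interval_cases N
        · exact h1
        · rw [hrec 2 (by norm_num), Stmt8Aux.F_two]
          norm_num [h1]
      · rw [hrec N (by omega), Stmt8Aux.F_rec l r x h3,
          ← ih (N - 1) (by omega) (by omega), ← ih (N - 2) (by omega) (by omega)]
        congr 2
        · congr 1
          push_cast [Nat.cast_sub (by omega : 1 ≤ N)]
          ring_nf
        · congr 1
          push_cast [Nat.cast_sub (by omega : 2 ≤ N)]
          ring_nf
  rw [key n hn]
  simp only [Stmt8Aux.F, Stmt8Aux.T, Stmt8Aux.S]
end

section
/- Let R be a commutative ring, let a ∈ R be invertible, and let z, u, v ∈ R. Suppose y is a function from the even integers to R with y_0 = u satisfying a·y_{n−2} − a^{−1}·y_n = z·v for every even integer n. Then for every even integer n one has (a − a^{−1})·y_n = a^n·(a − a^{−1})·u + z·(1 − a^n)·v. -/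
/-- The algebraic identity underlying the reduction formula for the HOMFLY
polynomial: if `a` is invertible, `y` is defined on even integers with `y₀ = u`
and satisfies the skein-type relation `a·y_{n−2} − a⁻¹·yₙ = z·v` for every even
`n`, then `(a − a⁻¹)·yₙ = aⁿ·(a − a⁻¹)·u + z·(1 − aⁿ)·v` for every even `n`. -/
theorem stmt9 {R : Type*} [CommRing R] (a : Rˣ) (z u v : R) (y : ℤ → R)
    (hy0 : y 0 = u)
    (hrec : ∀ n : ℤ, Even n → (a : R) * y (n - 2) - (↑a⁻¹ : R) * y n = z * v) :
    ∀ n : ℤ, Even n →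
      ((a : R) - ↑a⁻¹) * y n =
        (↑(a ^ n) : R) * ((a : R) - ↑a⁻¹) * u + z * (1 - (↑(a ^ n) : R)) * v := by
  have hab : (a : R) * (↑a⁻¹ : R) = 1 := by
    rw [← Units.val_mul, mul_inv_cancel, Units.val_one]
  have key : ∀ k : ℤ, ((a : R) - ↑a⁻¹) * y (2 * k) =
      (↑(a ^ (2 * k)) : R) * ((a : R) - ↑a⁻¹) * u + z * (1 - (↑(a ^ (2 * k)) : R)) * v := by
    intro k
    induction k using Int.induction_on with
    | zero => simp [hy0]
    | succ k ih =>
      have h := hrec (2 * ((k : ℤ) + 1)) ⟨k + 1, two_mul _⟩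
      have h2 : (2 * ((k : ℤ) + 1) - 2) = 2 * (k : ℤ) := by ring
      rw [h2] at h
      have hcast : (↑(a ^ (2 * ((k : ℤ) + 1))) : R) =
          (↑(a ^ (2 * (k : ℤ))) : R) * (a : R) * (a : R) := by
        rw [show (2 * ((k : ℤ) + 1)) = 2 * (k : ℤ) + 1 + 1 by ring,
          zpow_add_one, zpow_add_one, Units.val_mul, Units.val_mul]
      rw [hcast]
      linear_combination (a : R) ^ 2 * ih - (a : R) * ((a : R) - ↑a⁻¹) * h -
        (((a : R) - ↑a⁻¹) * y (2 * ((k : ℤ) + 1)) - z * v) * hab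
    | pred k ih =>
      have h := hrec (2 * (-(k : ℤ))) ⟨-k, two_mul _⟩
      have h2 : (2 * (-(k : ℤ)) - 2) = 2 * (-(k : ℤ) - 1) := by ring
      rw [h2] at h
      have hcast : (↑(a ^ (2 * (-(k : ℤ) - 1))) : R) =
          (↑(a ^ (2 * (-(k : ℤ)))) : R) * (↑a⁻¹ : R) * (↑a⁻¹ : R) := by
        rw [show (2 * (-(k : ℤ) - 1)) = 2 * (-(k : ℤ)) - 1 - 1 by ring,
          zpow_sub_one, zpow_sub_one, Units.val_mul, Units.val_mul]
      rw [hcast]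
      linear_combination (↑a⁻¹ : R) * ((a : R) - ↑a⁻¹) * h + (↑a⁻¹ : R) ^ 2 * ih -
        (((a : R) - ↑a⁻¹) * y (2 * (-(k : ℤ) - 1)) - z * v) * hab
  intro n hn
  obtain ⟨k, hk⟩ := hn
  have : n = 2 * k := by omega
  rw [this]
  exact key k
end

section
/- Let n be an odd positive integer and let b_1, …, b_n be nonzero even integers. Write [b_1, …, b_n] = p/q and [b_n, …, b_1] = p̄/q̄, both in lowest terms with q > 0 and q̄ > 0. Then q̄ = q and p·p̄ ≡ 1 (mod 2q). -/
/-- The matrix `M(b₁) ⬝ ⋯ ⬝ M(bₙ)` where `M(x) = [[x,1],[1,0]]`, as a tuple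
`(a, b, c, d)` representing `[[a, b], [c, d]]`. -/
def cmat : List ℤ → ℤ × ℤ × ℤ × ℤ
  | [] => (1, 0, 0, 1)
  | x :: t =>
    (x * (cmat t).1 + (cmat t).2.2.1, x * (cmat t).2.1 + (cmat t).2.2.2,
     (cmat t).1, (cmat t).2.1)

def cmul (m n : ℤ × ℤ × ℤ × ℤ) : ℤ × ℤ × ℤ × ℤ :=
  (m.1 * n.1 + m.2.1 * n.2.2.1, m.1 * n.2.1 + m.2.1 * n.2.2.2,
   m.2.2.1 * n.1 + m.2.2.2 * n.2.2.1, m.2.2.1 * n.2.1 + m.2.2.2 * n.2.2.2)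

lemma cmat_append (l m : List ℤ) : cmat (l ++ m) = cmul (cmat l) (cmat m) := by
  induction l with
  | nil =>
    simp only [List.nil_append, cmat, cmul]
    refine Prod.ext ?_ (Prod.ext ?_ (Prod.ext ?_ ?_)) <;> dsimp <;> ring
  | cons x t ih =>
    rw [List.cons_append]
    show (_, _, _, _) = cmul (cmat (x :: t)) (cmat m)
    rw [ih]
    show _ = cmul (_, _, _, _) (cmat m)
    simp only [cmul]
    refine Prod.ext ?_ (Prod.ext ?_ (Prod.ext ?_ ?_)) <;> dsimp <;> ring

lemma cmat_reverse (l : List ℤ) :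
    cmat l.reverse = ((cmat l).1, (cmat l).2.2.1, (cmat l).2.1, (cmat l).2.2.2) := by
  induction l with
  | nil => simp [cmat]
  | cons x t ih =>
    rw [List.reverse_cons, cmat_append, ih]
    show cmul _ (_, _, _, _) = _
    simp only [cmul, cmat]
    refine Prod.ext ?_ (Prod.ext ?_ (Prod.ext ?_ ?_)) <;> dsimp <;> ring

lemma cmat_det (l : List ℤ) :
    (cmat l).1 * (cmat l).2.2.2 - (cmat l).2.1 * (cmat l).2.2.1 = (-1) ^ l.length := by
  induction l with
  | nil => simp [cmat]
  | cons x t ih =>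
    simp only [cmat, List.length_cons, pow_succ]
    nlinarith [ih]

lemma cmat_parity (l : List ℤ) (h : ∀ x ∈ l, Even x) :
    (Odd l.length → Even (cmat l).2.2.2) ∧ (Even l.length → Even (cmat l).2.1) := by
  induction l with
  | nil => simp [cmat]
  | cons x t ih =>
    have hx : Even x := h x List.mem_cons_self
    have ih' := ih (fun y hy => h y (List.mem_cons_of_mem x hy))
    constructor
    · intro hlen
      have : Even t.length := by
        rcases hlen with ⟨k, hk⟩
        simp only [List.length_cons] at hk
        exact ⟨k, by omega⟩
      exact ih'.2 this
    · intro hlen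
      have ht : Odd t.length := by
        rcases hlen with ⟨k, hk⟩
        simp only [List.length_cons] at hk
        exact ⟨k - 1, by omega⟩
      have h1 : Even ((cmat t).2.2.2) := ih'.1 ht
      show Even (x * (cmat t).2.1 + (cmat t).2.2.2)
      exact (hx.mul_right _).add h1

lemma cf_eq (l : List ℤ) (hb : ∀ x ∈ l, x ≠ 0 ∧ Even x) :
    (cmat l).1 ≠ 0 ∧ |cf l| < 1 ∧ cf l = ((cmat l).2.2.1 : ℚ) / ((cmat l).1 : ℚ) := by
  induction l with
  | nil => simp [cmat, cf]
  | cons x t ih =>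
    obtain ⟨hx0, hxe⟩ := hb x List.mem_cons_self
    obtain ⟨ha, habs, hval⟩ := ih (fun y hy => hb y (List.mem_cons_of_mem x hy))
    have hx2' : (2 : ℤ) ≤ |x| := by
      rcases hxe with ⟨k, hk⟩
      rcases le_or_gt 0 x with h | h
      · rw [abs_of_nonneg h]; omega
      · rw [abs_of_neg h]; omega
    have hx2 : (2 : ℚ) ≤ |(x : ℚ)| := by
      rw [← Int.cast_abs]
      exact_mod_cast hx2'
    have hden : (1 : ℚ) < |(x : ℚ) + cf t| := by
      have h3 := abs_add_le ((x : ℚ) + cf t) (-(cf t))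
      simp only [add_neg_cancel_right, abs_neg] at h3
      linarith
    have hdne : (x : ℚ) + cf t ≠ 0 := by
      intro h; rw [h, abs_zero] at hden; linarith
    have hcf : cf (x :: t) = 1 / ((x : ℚ) + cf t) := rfl
    have habs' : |cf (x :: t)| < 1 := by
      rw [hcf, abs_div, abs_one, div_lt_one (by linarith [abs_nonneg ((x:ℚ) + cf t)])]
      exact hden
    have key : ((x : ℚ) + cf t) * ((cmat t).1 : ℚ) = ((x * (cmat t).1 + (cmat t).2.2.1 : ℤ) : ℚ) := by
      push_cast
      rw [hval]
      have haQ : ((cmat t).1 : ℚ) ≠ 0 := by exact_mod_cast ha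
      field_simp
    have hane : ((x * (cmat t).1 + (cmat t).2.2.1 : ℤ) : ℚ) ≠ 0 := by
      rw [← key]
      exact mul_ne_zero hdne (by exact_mod_cast ha)
    refine ⟨by exact_mod_cast hane, habs', ?_⟩
    rw [hcf]
    show (1 : ℚ) / ((x:ℚ) + cf t) =
        ((cmat t).1 : ℚ) / ((x * (cmat t).1 + (cmat t).2.2.1 : ℤ) : ℚ)
    rw [div_eq_div_iff hdne hane, ← key]
    ring

/-- num/den of `c / a` for coprime `c`, `a` with `a ≠ 0`. -/
lemma ratspec {a c : ℤ} (ha : a ≠ 0) (h : Nat.Coprime c.natAbs a.natAbs) :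
    ((c : ℚ) / a).num = c * a.sign ∧ (((c : ℚ) / a).den : ℤ) = |a| := by
  rcases lt_or_gt_of_ne ha with hneg | hpos
  · have h' : Nat.Coprime (-c).natAbs (-a).natAbs := by
      rwa [Int.natAbs_neg, Int.natAbs_neg]
    have hpos' : (0 : ℤ) < -a := by omega
    have e : (c : ℚ) / a = ((-c : ℤ) : ℚ) / ((-a : ℤ) : ℚ) := by
      push_cast
      rw [div_eq_div_iff (by exact_mod_cast ha) (by exact_mod_cast hpos'.ne')]
      ring
    rw [e, Rat.num_div_eq_of_coprime hpos' h', Rat.den_div_eq_of_coprime hpos' h']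
    constructor
    · rw [Int.sign_eq_neg_one_of_neg hneg]; ring
    · rw [abs_of_neg hneg]
  · rw [Rat.num_div_eq_of_coprime hpos h, Rat.den_div_eq_of_coprime hpos h]
    constructor
    · rw [Int.sign_eq_one_of_pos hpos]; ring
    · rw [abs_of_pos hpos]

/-- Let `n` be odd, `b₁, …, bₙ` nonzero even integers, and write
`[b₁, …, bₙ] = p/q` and `[bₙ, …, b₁] = p̄/q̄` in lowest terms with positive
denominators. Then `q̄ = q` and `p·p̄ ≡ 1 (mod 2q)`. -/
theorem stmt11 (l : List ℤ) (hodd : Odd l.length)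
    (hb : ∀ x ∈ l, x ≠ 0 ∧ Even x) :
    (cf l.reverse).den = (cf l).den ∧
      (cf l).num * (cf l.reverse).num ≡ 1 [ZMOD (2 * ((cf l).den : ℤ))] := by
  obtain ⟨ha, -, hval⟩ := cf_eq l hb
  have hbrev : ∀ x ∈ l.reverse, x ≠ 0 ∧ Even x := fun x hx => hb x (List.mem_reverse.mp hx)
  obtain ⟨-, -, hvalr⟩ := cf_eq l.reverse hbrev
  rw [cmat_reverse] at hvalr
  have hdet : (cmat l).1 * (cmat l).2.2.2 - (cmat l).2.1 * (cmat l).2.2.1 = -1 := by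
    have := cmat_det l
    rwa [hodd.neg_one_pow] at this
  have heven : Even (cmat l).2.2.2 := (cmat_parity l (fun x hx => (hb x hx).2)).1 hodd
  rcases hcm : cmat l with ⟨a, b, c, d⟩
  rw [hcm] at ha hval hvalr hdet heven
  dsimp only at ha hval hvalr hdet heven
  -- coprimality
  have hcop1 : Nat.Coprime c.natAbs a.natAbs := by
    have : IsCoprime c a := ⟨b, -d, by linarith⟩
    exact Int.isCoprime_iff_gcd_eq_one.mp this
  have hcop2 : Nat.Coprime b.natAbs a.natAbs := by
    have : IsCoprime b a := ⟨c, -d, by linarith⟩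
    exact Int.isCoprime_iff_gcd_eq_one.mp this
  obtain ⟨hnum1, hden1⟩ := ratspec ha hcop1
  obtain ⟨hnum2, hden2⟩ := ratspec ha hcop2
  rw [← hval] at hnum1 hden1
  rw [← hvalr] at hnum2 hden2
  have hdeneq : (cf l.reverse).den = (cf l).den := by
    have : ((cf l.reverse).den : ℤ) = ((cf l).den : ℤ) := by rw [hden1, hden2]
    exact_mod_cast this
  refine ⟨hdeneq, ?_⟩
  obtain ⟨e, he⟩ := heven
  have hsign : a.sign * a.sign = 1 := by
    rcases lt_or_gt_of_ne ha with h | h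
    · rw [Int.sign_eq_neg_one_of_neg h]; ring
    · rw [Int.sign_eq_one_of_pos h]; ring
  have hprod : (cf l).num * (cf l.reverse).num = c * b := by
    rw [hnum1, hnum2]
    calc c * a.sign * (b * a.sign) = c * b * (a.sign * a.sign) := by ring
      _ = c * b := by rw [hsign, mul_one]
  rw [hprod]
  have hsub : (1 : ℤ) - c * b = 2 * (a * (-e)) := by linear_combination hdet - a * he
  have hdvd : (2 * ((cf l).den : ℤ)) ∣ (1 - c * b) := by
    rw [hden1, hsub]
    exact mul_dvd_mul_left 2 ((abs_dvd a (a * (-e))).mpr (dvd_mul_right a (-e)))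
  exact Int.modEq_iff_dvd.mpr hdvd
end

section
/- Let n ≥ 1 and let b_1, …, b_n be nonzero even integers. In the field ℚ(a, z) of rational functions in two variables over ℚ, define x_{−1} = z^{−1}·(a − a^{−1}), x_0 = 1, and for 1 ≤ m ≤ n define x_m = z·((1 − a^{ε_m b_m})/(a − a^{−1}))·x_{m−1} + a^{ε_m b_m}·x_{m−2}, where ε_m = (−1)^{m−1}. For an integer k with n − k even and 0 ≤ (n − k)/2, define ρ_k = Σ_C Π_{m ∈ C} a^{(−1)^{m+1} b_m} · Π_{m ∈ {1,…,n} \ (C ∪ (C−1))} (1 − a^{(−1)^{m+1} b_m}), where the sum is over all subsets C ⊆ {1, …, n} with C ∩ (C − 1) = ∅ and |C| = (n − k)/2, and C − 1 = {c − 1 : c ∈ C}. Then: if n is even, x_n = Σ_{k even, 0 ≤ k ≤ n} z^k·(a − a^{−1})^{−k}·ρ_k; and if n is odd, x_n = Σ_{k odd, −1 ≤ k ≤ n} z^k·(a − a^{−1})^{−k}·ρ_k. -/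
/-- The field `ℚ(a, z)` of rational functions in two indeterminates over `ℚ`. -/
abbrev RatFunc2 : Type := FractionRing (MvPolynomial (Fin 2) ℚ)

/-- `ρ_k(α) = Σ_C Π_{m ∈ C} a^{(−1)^{m+1} b_m} ·
Π_{m ∈ {1,…,n} ∖ (C ∪ (C−1))} (1 − a^{(−1)^{m+1} b_m})`, the sum over all
subsets `C ⊆ {1, …, n}` with `C ∩ (C−1) = ∅` and `|C| = (n − k)/2`. -/
noncomputable def rho (n : ℕ) (b : ℕ → ℤ) (a : RatFunc2) (k : ℤ) : RatFunc2 :=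
  ∑ s ∈ (Finset.Icc 1 n).powerset.filter
      (fun s => s ∩ s.image (· - 1) = ∅ ∧ (2 * s.card : ℤ) = (n : ℤ) - k),
    (∏ m ∈ s, a ^ ((-1 : ℤ) ^ (m + 1) * b m)) *
      ∏ m ∈ Finset.Icc 1 n \ (s ∪ s.image (· - 1)), (1 - a ^ ((-1 : ℤ) ^ (m + 1) * b m))

lemma rho_zero_parity (n : ℕ) (b : ℕ → ℤ) (a : RatFunc2) (k : ℤ)
    (h : ¬ Even ((n : ℤ) - k)) : rho n b a k = 0 := by
  apply Finset.sum_eq_zero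
  intro s hs
  simp only [Finset.mem_filter] at hs
  exact absurd ⟨s.card, by omega⟩ h

lemma rho_zero_gt (n : ℕ) (b : ℕ → ℤ) (a : RatFunc2) (k : ℤ)
    (h : (n : ℤ) < k) : rho n b a k = 0 := by
  apply Finset.sum_eq_zero
  intro s hs
  simp only [Finset.mem_filter] at hs
  have : (0 : ℤ) ≤ (s.card : ℤ) := by positivity
  omega

lemma rho_zero_lt (n : ℕ) (b : ℕ → ℤ) (a : RatFunc2) (k : ℤ)
    (h : k < -1) : rho n b a k = 0 := by
  apply Finset.sum_eq_zero
  intro s hs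
  simp only [Finset.mem_powerset, Finset.mem_filter] at hs
  obtain ⟨hsub, hdisj, hcard⟩ := hs
  exfalso
  have hinj : Set.InjOn (· - 1) s := by
    intro x hx y hy hxy
    have hx1 : 1 ≤ x := (Finset.mem_Icc.1 (hsub hx)).1
    have hy1 : 1 ≤ y := (Finset.mem_Icc.1 (hsub hy)).1
    simp only at hxy
    omega
  have him : (s.image (· - 1)).card = s.card := Finset.card_image_of_injOn hinj
  have hdis : Disjoint s (s.image (· - 1)) := Finset.disjoint_iff_inter_eq_empty.2 hdisj
  have hU : s ∪ s.image (· - 1) ⊆ Finset.Icc 0 n := by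
    intro y hy
    rcases Finset.mem_union.1 hy with hy | hy
    · have := Finset.mem_Icc.1 (hsub hy); exact Finset.mem_Icc.2 ⟨by omega, this.2⟩
    · obtain ⟨x, hx, rfl⟩ := Finset.mem_image.1 hy
      have := Finset.mem_Icc.1 (hsub hx); exact Finset.mem_Icc.2 ⟨by omega, by omega⟩
  have := Finset.card_le_card hU
  rw [Finset.card_union_of_disjoint hdis, him, Nat.card_Icc] at this
  omega

lemma complA (m : ℕ) (s : Finset ℕ) (hsub : s ⊆ Finset.Icc 1 (m+1)) :
    Finset.Icc 1 (m+2) \ (s ∪ s.image (· - 1))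
      = insert (m+2) (Finset.Icc 1 (m+1) \ (s ∪ s.image (· - 1))) := by
  ext y
  simp only [Finset.mem_sdiff, Finset.mem_insert, Finset.mem_union, Finset.mem_image,
    Finset.mem_Icc]
  constructor
  · rintro ⟨⟨h1, h2⟩, h3⟩
    rcases eq_or_ne y (m+2) with rfl | hne
    · exact Or.inl rfl
    · exact Or.inr ⟨⟨h1, by omega⟩, h3⟩
  · rintro (rfl | ⟨⟨h1, h2⟩, h3⟩)
    · refine ⟨⟨by omega, le_refl _⟩, ?_⟩
      rintro (hy | ⟨x, hx, hxy⟩)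
      · have := Finset.mem_Icc.1 (hsub hy); omega
      · have := Finset.mem_Icc.1 (hsub hx); omega
    · exact ⟨⟨h1, by omega⟩, h3⟩

lemma complB (m : ℕ) (t : Finset ℕ) :
    Finset.Icc 1 (m+2) \ (insert (m+2) t ∪ (insert (m+2) t).image (· - 1))
      = Finset.Icc 1 m \ (t ∪ t.image (· - 1)) := by
  rw [Finset.image_insert]
  ext y
  simp only [Finset.mem_sdiff, Finset.mem_insert, Finset.mem_union, Finset.mem_image,
    Finset.mem_Icc]
  constructor
  · rintro ⟨⟨h1, h2⟩, h3⟩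
    push_neg at h3
    obtain ⟨⟨hne2, hnt⟩, hne1, him⟩ := h3
    refine ⟨⟨h1, by omega⟩, ?_⟩
    rintro (hy | ⟨x, hx, hxy⟩)
    · exact hnt hy
    · exact him x hx hxy
  · rintro ⟨⟨h1, h2⟩, h3⟩
    push_neg at h3
    refine ⟨⟨h1, by omega⟩, ?_⟩
    rintro ((rfl | hy) | (hy | ⟨x, hx, hxy⟩))
    · omega
    · exact h3.1 hy
    · omega
    · exact h3.2 x hx hxy

lemma rho_rec (m : ℕ) (b : ℕ → ℤ) (a : RatFunc2) (k : ℤ) :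
    rho (m+2) b a k
      = (1 - a ^ ((-1 : ℤ) ^ (m+2+1) * b (m+2))) * rho (m+1) b a (k-1)
        + a ^ ((-1 : ℤ) ^ (m+2+1) * b (m+2)) * rho m b a k := by
  classical
  unfold rho
  rw [← Finset.sum_filter_add_sum_filter_not
    ((Finset.Icc 1 (m+2)).powerset.filter
      (fun s => s ∩ s.image (· - 1) = ∅ ∧ (2 * s.card : ℤ) = ((m+2 : ℕ) : ℤ) - k))
    (fun s => (m+2) ∉ s)]
  congr 1
  · -- part A : m+2 ∉ s
    have hset : ((Finset.Icc 1 (m+2)).powerset.filter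
        (fun s => s ∩ s.image (· - 1) = ∅ ∧ (2 * s.card : ℤ) = ((m+2 : ℕ) : ℤ) - k)).filter
        (fun s => (m+2) ∉ s)
        = (Finset.Icc 1 (m+1)).powerset.filter
          (fun s => s ∩ s.image (· - 1) = ∅ ∧ (2 * s.card : ℤ) = ((m+1 : ℕ) : ℤ) - (k-1)) := by
      ext s
      simp only [Finset.mem_filter, Finset.mem_powerset]
      constructor
      · rintro ⟨⟨hsub, hdisj, hcard⟩, hnot⟩
        refine ⟨?_, hdisj, by push_cast at hcard ⊢; omega⟩
        intro x hx
        have : x ≠ m+2 := fun h => hnot (h ▸ hx)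
        exact Finset.mem_Icc.2 ⟨(Finset.mem_Icc.1 (hsub hx)).1, by
          have := (Finset.mem_Icc.1 (hsub hx)).2; omega⟩
      · rintro ⟨hsub, hdisj, hcard⟩
        have hnot : (m+2) ∉ s := fun h => by
          have := (Finset.mem_Icc.1 (hsub h)).2; omega
        exact ⟨⟨hsub.trans (Finset.Icc_subset_Icc_right (by omega)), hdisj,
          by push_cast at hcard ⊢; omega⟩, hnot⟩
    rw [hset, Finset.mul_sum]
    apply Finset.sum_congr rfl
    intro s hs
    simp only [Finset.mem_filter, Finset.mem_powerset] at hs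
    rw [complA m s hs.1, Finset.prod_insert (by
      simp only [Finset.mem_sdiff, Finset.mem_Icc]; omega)]
    ring
  · -- part B : m+2 ∈ s
    rw [Finset.mul_sum]
    apply Finset.sum_nbij' (i := fun s => s.erase (m+2)) (j := fun t => insert (m+2) t)
    · intro s hs
      simp only [Finset.mem_filter, Finset.mem_powerset, not_not] at hs
      obtain ⟨⟨hsub, hdisj, hcard⟩, hN⟩ := hs
      have hc1 : 1 ≤ s.card := Finset.card_pos.2 ⟨m+2, hN⟩
      simp only [Finset.mem_filter, Finset.mem_powerset]
      refine ⟨?_, ?_, ?_⟩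
      · intro x hx
        have hxs := Finset.mem_erase.1 hx
        have hb := Finset.mem_Icc.1 (hsub hxs.2)
        have hxne : x ≠ m+1 := by
          intro h
          have : x ∈ s ∩ s.image (· - 1) := Finset.mem_inter.2
            ⟨hxs.2, Finset.mem_image.2 ⟨m+2, hN, by omega⟩⟩
          rw [hdisj] at this
          exact absurd this (Finset.notMem_empty x)
        exact Finset.mem_Icc.2 ⟨hb.1, by omega⟩
      · have hss : s.erase (m+2) ∩ (s.erase (m+2)).image (· - 1)
            ⊆ s ∩ s.image (· - 1) :=
          Finset.inter_subset_inter (Finset.erase_subset _ _)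
            (Finset.image_subset_image (Finset.erase_subset _ _))
        rw [hdisj] at hss
        exact Finset.subset_empty.1 hss
      · rw [Finset.card_erase_of_mem hN]
        push_cast at hcard ⊢
        omega
    · intro t ht
      simp only [Finset.mem_filter, Finset.mem_powerset] at ht
      obtain ⟨hsub, hdisj, hcard⟩ := ht
      have hNt : (m+2) ∉ t := fun h => by
        have := (Finset.mem_Icc.1 (hsub h)).2; omega
      simp only [Finset.mem_filter, Finset.mem_powerset, not_not]
      refine ⟨⟨?_, ?_, ?_⟩, Finset.mem_insert_self _ _⟩
      · exact Finset.insert_subset (Finset.mem_Icc.2 ⟨by omega, le_refl _⟩)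
          (hsub.trans (Finset.Icc_subset_Icc_right (by omega)))
      · rw [Finset.image_insert]
        apply Finset.eq_empty_iff_forall_notMem.2
        intro x hx
        simp only [Finset.mem_inter, Finset.mem_insert, Finset.mem_image] at hx
        obtain ⟨h1 | h1, h2 | h2⟩ := hx
        · omega
        · obtain ⟨y, hy, hxy⟩ := h2
          have := Finset.mem_Icc.1 (hsub hy); omega
        · have := Finset.mem_Icc.1 (hsub h1); omega
        · obtain ⟨y, hy, hxy⟩ := h2
          have : x ∈ t ∩ t.image (· - 1) := Finset.mem_inter.2
            ⟨h1, Finset.mem_image.2 ⟨y, hy, hxy⟩⟩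
          rw [hdisj] at this
          exact absurd this (Finset.notMem_empty x)
      · rw [Finset.card_insert_of_notMem hNt]
        push_cast at hcard ⊢
        omega
    · intro s hs
      simp only [Finset.mem_filter, not_not] at hs
      exact Finset.insert_erase hs.2
    · intro t ht
      simp only [Finset.mem_filter, Finset.mem_powerset] at ht
      exact Finset.erase_insert (fun h => by
        have := (Finset.mem_Icc.1 (ht.1 h)).2; omega)
    · intro s hs
      simp only [Finset.mem_filter, Finset.mem_powerset, not_not] at hs
      obtain ⟨⟨hsub, hdisj, hcard⟩, hN⟩ := hs
      calc (∏ mm ∈ s, a ^ ((-1 : ℤ) ^ (mm + 1) * b mm)) *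
            ∏ mm ∈ Finset.Icc 1 (m+2) \ (s ∪ s.image (· - 1)),
              (1 - a ^ ((-1 : ℤ) ^ (mm + 1) * b mm))
          = a ^ ((-1 : ℤ) ^ (m+2+1) * b (m+2)) *
            ((∏ mm ∈ s.erase (m+2), a ^ ((-1 : ℤ) ^ (mm + 1) * b mm)) *
              ∏ mm ∈ Finset.Icc 1 m \ (s.erase (m+2) ∪ (s.erase (m+2)).image (· - 1)),
                (1 - a ^ ((-1 : ℤ) ^ (mm + 1) * b mm))) := by
            rw [← Finset.mul_prod_erase s _ hN]
            have : Finset.Icc 1 (m+2) \ (s ∪ s.image (· - 1))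
                = Finset.Icc 1 m \ (s.erase (m+2) ∪ (s.erase (m+2)).image (· - 1)) := by
              conv_lhs => rw [← Finset.insert_erase hN]
              exact complB m (s.erase (m+2))
            rw [this]
            ring

noncomputable def Gsum (b : ℕ → ℤ) (a z : RatFunc2) (n : ℕ) : RatFunc2 :=
  ∑ k ∈ Finset.Icc (-1 : ℤ) (n : ℤ), z ^ k * (a - a⁻¹) ^ (-k) * rho n b a k

set_option maxHeartbeats 2000000 in
lemma Gsum_rec (b : ℕ → ℤ) (a z : RatFunc2) (hz0 : z ≠ 0) (hd : a - a⁻¹ ≠ 0) (m : ℕ) :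
    Gsum b a z (m+2)
      = z * ((1 - a ^ ((-1 : ℤ) ^ (m+2+1) * b (m+2))) / (a - a⁻¹)) * Gsum b a z (m+1)
        + a ^ ((-1 : ℤ) ^ (m+2+1) * b (m+2)) * Gsum b a z m := by
  set u : RatFunc2 := a ^ ((-1 : ℤ) ^ (m+2+1) * b (m+2)) with hu
  set d : RatFunc2 := a - a⁻¹ with hdd
  have step : ∀ k ∈ Finset.Icc (-1 : ℤ) ((m+2 : ℕ) : ℤ),
      z ^ k * d ^ (-k) * rho (m+2) b a k
        = (z * ((1-u)/d)) * (z ^ (k-1) * d ^ (-(k-1)) * rho (m+1) b a (k-1))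
          + u * (z ^ k * d ^ (-k) * rho m b a k) := by
    intro k _
    rw [rho_rec m b a k, ← hu]
    have e1 : z ^ (k - 1) = z ^ k * z⁻¹ := zpow_sub_one₀ hz0 k
    have e2 : d ^ (-(k-1)) = d ^ (-k) * d := by
      rw [show -(k-1) = -k + 1 by ring, zpow_add₀ hd, zpow_one]
    rw [e1, e2]
    have hz1 : z * z⁻¹ = 1 := mul_inv_cancel₀ hz0
    have hd1 : d⁻¹ * d = 1 := inv_mul_cancel₀ hd
    rw [div_eq_mul_inv]
    generalize z ^ k = Z
    generalize d ^ (-k) = D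
    generalize rho (m+1) b a (k-1) = R1
    generalize rho m b a k = R0
    linear_combination (-(Z * D * (1-u) * R1) * d⁻¹ * d) * hz1 + (-(Z * D * (1-u) * R1)) * hd1
  rw [Gsum, Finset.sum_congr rfl step, Finset.sum_add_distrib, ← Finset.mul_sum,
    ← Finset.mul_sum]
  congr 1
  · congr 1
    have hmap : Finset.Icc (-1 : ℤ) ((m+2 : ℕ) : ℤ)
        = (Finset.Icc (-2 : ℤ) ((m+1 : ℕ) : ℤ)).map (addRightEmbedding 1) := by
      rw [Finset.map_add_right_Icc]
      congr 1 <;> push_cast <;> ring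
    rw [hmap, Finset.sum_map]
    simp only [addRightEmbedding_apply, add_sub_cancel_right, neg_add_rev]
    rw [Gsum]
    apply (Finset.sum_subset ?_ ?_).symm
    · apply Finset.Icc_subset_Icc_left; norm_num
    · intro k hk1 hk2
      simp only [Finset.mem_Icc] at hk1 hk2
      have : k < -1 := by omega
      rw [rho_zero_lt (m+1) b a k this, mul_zero]
  · congr 1
    rw [Gsum]
    apply (Finset.sum_subset ?_ ?_).symm
    · apply Finset.Icc_subset_Icc_right; push_cast; omega
    · intro k hk1 hk2
      simp only [Finset.mem_Icc] at hk1 hk2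
      have : (m : ℤ) < k := by omega
      rw [rho_zero_gt m b a k this, mul_zero]

lemma rho_zero_zero (b : ℕ → ℤ) (a : RatFunc2) : rho 0 b a 0 = 1 := by
  have h : Finset.Icc 1 0 = (∅ : Finset ℕ) := by decide
  simp [rho, h, Finset.filter_singleton]

lemma Gsum_zero (b : ℕ → ℤ) (a z : RatFunc2) : Gsum b a z 0 = 1 := by
  have h : Finset.Icc (-1 : ℤ) (0:ℤ) = {-1, 0} := by decide
  rw [Gsum]
  push_cast
  rw [h, Finset.sum_pair (by norm_num)]
  rw [rho_zero_zero, rho_zero_parity 0 b a (-1) (by decide)]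
  simp

lemma rho_one_neg (b : ℕ → ℤ) (a : RatFunc2) : rho 1 b a (-1) = a ^ (b 1) := by
  have h1 : Finset.Icc 1 1 = ({1} : Finset ℕ) := rfl
  have hp : ({1} : Finset ℕ).powerset = {∅, {1}} := by decide
  rw [rho, h1, hp]
  rw [Finset.filter_insert]
  rw [if_neg (by norm_num)]
  rw [Finset.filter_singleton, if_pos (by constructor <;> decide)]
  rw [Finset.sum_singleton]
  have : ({1} : Finset ℕ) \ ({1} ∪ ({1} : Finset ℕ).image (· - 1)) = ∅ := by decide
  rw [this]
  simp

lemma rho_one_one (b : ℕ → ℤ) (a : RatFunc2) : rho 1 b a 1 = 1 - a ^ (b 1) := by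
  have h1 : Finset.Icc 1 1 = ({1} : Finset ℕ) := rfl
  have hp : ({1} : Finset ℕ).powerset = {∅, {1}} := by decide
  rw [rho, h1, hp]
  rw [Finset.filter_insert, if_pos (by constructor <;> decide)]
  rw [Finset.filter_singleton, if_neg (by norm_num)]
  rw [Finset.sum_insert (Finset.notMem_empty _), Finset.sum_empty, add_zero]
  have : ({1} : Finset ℕ) \ ((∅ : Finset ℕ) ∪ (∅ : Finset ℕ).image (· - 1)) = {1} := by decide
  rw [this]
  simp

lemma Gsum_one (b : ℕ → ℤ) (a z : RatFunc2) :
    Gsum b a z 1 = z⁻¹ * (a - a⁻¹) * a ^ (b 1) + z * (a - a⁻¹)⁻¹ * (1 - a ^ (b 1)) := by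
  have h : Finset.Icc (-1 : ℤ) (1:ℤ) = {-1, 0, 1} := by decide
  rw [Gsum]
  push_cast
  rw [h]
  rw [Finset.sum_insert (by norm_num), Finset.sum_pair (by norm_num)]
  rw [rho_one_neg, rho_one_one, rho_zero_parity 1 b a 0 (by decide)]
  simp only [zpow_neg, zpow_one, zpow_zero, inv_inv]
  ring

/-- The paper's Theorem 2 (collected form): for the solution `xₙ` of the skein
recursion `x_m = z·((1 − a^{ε_m b_m})/(a − a⁻¹))·x_{m−1} + a^{ε_m b_m}·x_{m−2}`,
`ε_m = (−1)^{m−1}`, with `x₀ = 1`, `x₋₁ = z⁻¹(a − a⁻¹)`, in the field `ℚ(a,z)`: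
if `n` is even then `xₙ = Σ_{k even, 0 ≤ k ≤ n} z^k (a − a⁻¹)^{−k} ρ_k`, and
if `n` is odd then `xₙ = Σ_{k odd, −1 ≤ k ≤ n} z^k (a − a⁻¹)^{−k} ρ_k`. -/
theorem stmt13 (n : ℕ) (hn : 1 ≤ n) (b : ℕ → ℤ)
    (hb : ∀ i : ℕ, 1 ≤ i → i ≤ n → b i ≠ 0 ∧ Even (b i))
    (a z : RatFunc2)
    (ha : a = algebraMap (MvPolynomial (Fin 2) ℚ) RatFunc2 (MvPolynomial.X 0))
    (hz : z = algebraMap (MvPolynomial (Fin 2) ℚ) RatFunc2 (MvPolynomial.X 1))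
    (x : ℤ → RatFunc2) (hx0 : x 0 = 1) (hxneg : x (-1) = z⁻¹ * (a - a⁻¹))
    (hrec : ∀ m : ℕ, 1 ≤ m → m ≤ n →
      x m = z * ((1 - a ^ ((-1 : ℤ) ^ (m - 1) * b m)) / (a - a⁻¹)) * x ((m : ℤ) - 1)
          + a ^ ((-1 : ℤ) ^ (m - 1) * b m) * x ((m : ℤ) - 2)) :
    (Even n → x n = ∑ k ∈ (Finset.Icc (0 : ℤ) n).filter (fun k => Even k),
        z ^ k * (a - a⁻¹) ^ (-k) * rho n b a k) ∧
    (Odd n → x n = ∑ k ∈ (Finset.Icc (-1 : ℤ) n).filter (fun k => Odd k),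
        z ^ k * (a - a⁻¹) ^ (-k) * rho n b a k) := by
  have hinj := IsFractionRing.injective (MvPolynomial (Fin 2) ℚ) RatFunc2
  have hz0 : z ≠ 0 := by
    rw [hz]; exact (map_ne_zero_iff _ hinj).2 (MvPolynomial.X_ne_zero 1)
  have ha0 : a ≠ 0 := by
    rw [ha]; exact (map_ne_zero_iff _ hinj).2 (MvPolynomial.X_ne_zero 0)
  have hd : a - a⁻¹ ≠ 0 := by
    intro h
    have h1 : a = a⁻¹ := sub_eq_zero.1 h
    have h2 : a * a = 1 := by
      nth_rewrite 1 [h1]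
      exact inv_mul_cancel₀ ha0
    rw [ha, ← map_mul,
      show (1 : RatFunc2) = algebraMap (MvPolynomial (Fin 2) ℚ) RatFunc2 1 from
        (map_one _).symm] at h2
    have h4 := congrArg (MvPolynomial.eval (fun _ => (0:ℚ))) (hinj h2)
    simp at h4
  -- main induction
  have key : ∀ mm : ℕ, mm ≤ n → x mm = Gsum b a z mm := by
    intro mm
    induction mm using Nat.strong_induction_on with
    | _ mm ih =>
      match mm with
      | 0 => intro _; rw [Gsum_zero]; exact_mod_cast hx0
      | 1 =>
        intro h1n
        have hr := hrec 1 le_rfl h1n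
        rw [Gsum_one]
        push_cast at hr ⊢
        rw [hr, hx0, hxneg, show (1:ℤ) * b 1 = b 1 from one_mul _, div_eq_mul_inv]
        ring
      | (j+2) =>
        intro hle
        have h1 := ih (j+1) (by omega) (by omega)
        have h2 := ih j (by omega) (by omega)
        have hr := hrec (j+2) (by omega) hle
        have hc1 : ((j+2 : ℕ) : ℤ) - 1 = ((j+1 : ℕ) : ℤ) := by push_cast; ring
        have hc2 : ((j+2 : ℕ) : ℤ) - 2 = ((j : ℕ) : ℤ) := by push_cast; ring
        rw [hc1, hc2, h1, h2] at hr
        have hexp : ((-1 : ℤ)) ^ (j + 2 - 1) = (-1 : ℤ) ^ (j+2+1) := by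
          have h2 : j+2+1 = (j+2-1) + 2 := by omega
          rw [h2, pow_add, neg_one_sq, mul_one]
        rw [hexp] at hr
        rw [hr, Gsum_rec b a z hz0 hd j]
  have hxn : x n = Gsum b a z n := key n le_rfl
  constructor
  · intro hev
    rw [hxn, Gsum]
    refine (Finset.sum_subset ?_ ?_).symm
    · intro k hk
      simp only [Finset.mem_filter, Finset.mem_Icc] at hk
      exact Finset.mem_Icc.2 ⟨by omega, hk.1.2⟩
    · intro k hk1 hk2
      rw [Finset.mem_Icc] at hk1
      have hkodd : ¬ Even k := by
        intro h
        rcases lt_or_eq_of_le hk1.1 with h' | h'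
        · exact hk2 (Finset.mem_filter.2 ⟨Finset.mem_Icc.2 ⟨by omega, hk1.2⟩, h⟩)
        · rw [← h'] at h
          exact absurd h (by decide)
      have hpar : ¬ Even ((n:ℤ) - k) := fun hek =>
        hkodd ((Int.even_sub.1 hek).1 ((Int.even_coe_nat n).2 hev))
      rw [rho_zero_parity n b a k hpar, mul_zero]
  · intro hod
    rw [hxn, Gsum]
    refine (Finset.sum_subset (Finset.filter_subset _ _) ?_).symm
    intro k hk1 hk2
    have hkev : Even k := by
      by_contra h
      exact hk2 (Finset.mem_filter.2 ⟨hk1, Int.not_even_iff_odd.1 h⟩)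
    have hpar : ¬ Even ((n:ℤ) - k) := by
      intro hek
      have hne : Even ((n:ℤ)) := (Int.even_sub.1 hek).2 hkev
      rw [Int.even_coe_nat] at hne
      exact (Nat.not_even_iff_odd.2 hod) hne
    rw [rho_zero_parity n b a k hpar, mul_zero]
end
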